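/- Let 0 ≤ μ < 1, η > 0, λ > 0. Both roots of z^2 - ((1+μ) - (1-μ)ηλ) z + μ = 0 have modulus strictly less than 1 if and only if 0 < (1-μ)ηλ < 2(1+μ). -/

import Mathlib

set_option maxHeartbeats 1000000

/-- Stability of heavy-ball momentum on a quadratic: all complex roots of
`z^2 - ((1+μ) - (1-μ)ηλ) z + μ` lie strictly inside the unit disk iff
`0 < (1-μ)ηλ < 2(1+μ)`. -/
theorem stmt_10 (μ η lam : ℝ) (hμ0 : 0 ≤ μ) (hμ1 : μ < 1) (hη : 0 < η) (hlam : 0 < lam) :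
    (∀ z : ℂ, z ^ 2 - (((1 + μ) - (1 - μ) * η * lam : ℝ) : ℂ) * z + (μ : ℂ) = 0 →
        ‖z‖ < 1) ↔
      (0 < (1 - μ) * η * lam ∧ (1 - μ) * η * lam < 2 * (1 + μ)) := by
  have hs0 : 0 < (1 - μ) * η * lam :=
    mul_pos (mul_pos (by linarith) hη) hlam
  set s : ℝ := (1 - μ) * η * lam with hsdef
  set b : ℝ := (1 + μ) - s with hbdef
  clear_value s
  clear_value b
  constructor
  · intro hroots
    refine ⟨hs0, ?_⟩
    by_contra hge
    push_neg at hge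
    -- f(-1) = 1 + b + μ = 2(1+μ) - s ≤ 0
    set f : ℝ → ℝ := fun t => t ^ 2 - b * t + μ with hfdef
    have hcont : ContinuousOn f (Set.Icc (-(2 + |b| + μ)) (-1)) := by
      apply Continuous.continuousOn; continuity
    have hle : -(2 + |b| + μ) ≤ (-1 : ℝ) := by
      have := abs_nonneg b; linarith
    have hfneg : f (-1) ≤ 0 := by
      simp only [hfdef]; ring_nf; linarith
    have hfpos : 0 ≤ f (-(2 + |b| + μ)) := by
      simp only [hfdef]
      have h1 : -|b| ≤ b := neg_abs_le b
      have h2 : b ≤ |b| := le_abs_self b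
      nlinarith [abs_nonneg b]
    have hmem : (0 : ℝ) ∈ Set.Icc (f (-1)) (f (-(2 + |b| + μ))) :=
      ⟨hfneg, hfpos⟩
    obtain ⟨r, hrI, hr0⟩ := intermediate_value_Icc' hle hcont hmem
    have hr1 : r ≤ -1 := hrI.2
    have hroot : (r : ℂ) ^ 2 - ((b : ℝ) : ℂ) * (r : ℂ) + (μ : ℂ) = 0 := by
      have : ((r ^ 2 - b * r + μ : ℝ) : ℂ) = 0 := by
        rw [show r ^ 2 - b * r + μ = f r from rfl, hr0]; simp
      push_cast at this ⊢
      linear_combination this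
    have habs := hroots (r : ℂ) hroot
    rw [Complex.norm_real, Real.norm_eq_abs] at habs
    have : (1 : ℝ) ≤ |r| := by
      rw [abs_of_nonpos (by linarith)]; linarith
    linarith
  · rintro ⟨-, hlt⟩ z hz
    have him : 2 * z.re * z.im - b * z.im = 0 := by
      have := congrArg Complex.im hz
      simp [pow_two, Complex.mul_im, Complex.mul_re] at this
      linarith
    have hre : z.re ^ 2 - z.im ^ 2 - b * z.re + μ = 0 := by
      have := congrArg Complex.re hz
      simp [pow_two, Complex.mul_im, Complex.mul_re] at this
      nlinarith [this]
    set x : ℝ := z.re with hxdef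
    set y : ℝ := z.im with hydef
    clear_value x
    clear_value y
    have hnormsq : x ^ 2 + y ^ 2 < 1 := by
      rcases eq_or_ne y 0 with hy0 | hy0
      · -- real root
        have hr : x ^ 2 - b * x + μ = 0 := by linear_combination hre + y * hy0
        have h1 : (1 - x) * (1 - b + x) = s := by linear_combination -hr - hbdef
        have h2 : (1 + x) * (1 + b - x) = 2 * (1 + μ) - s := by
          linear_combination -hr + hbdef
        have h3 : x * (b - x) = μ := by linear_combination -hr
        by_contra hcon
        push_neg at hcon
        have hy2 : y ^ 2 = 0 := by rw [hy0]; ring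
        have hx2 : 1 ≤ x ^ 2 := by linarith
        have h2pos : 0 < 2 * (1 + μ) - s := by linarith
        have hprod : (1 - x ^ 2) * (1 - (b - x) ^ 2) = s * (2 * (1 + μ) - s) := by
          linear_combination ((1 + x) * (1 + b - x)) * h1 + s * h2
        have hμ2 : (b - x) ^ 2 * x ^ 2 = μ ^ 2 := by
          linear_combination (x * (b - x) + μ) * h3
        have hbx : (b - x) ^ 2 < 1 := by
          have hA : 0 ≤ (b - x) ^ 2 * (x ^ 2 - 1) :=
            mul_nonneg (sq_nonneg _) (by linarith)
          nlinarith [hμ2, hA]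
        have hC : 0 ≤ (x ^ 2 - 1) * (1 - (b - x) ^ 2) :=
          mul_nonneg (by linarith) (by linarith)
        nlinarith [mul_pos hs0 h2pos, hprod, hC]
      · -- nonreal root: x = b/2, x² + y² = μ
        have hx2 : 2 * x = b := by
          have h0 : y * (2 * x - b) = 0 := by linear_combination him
          rcases mul_eq_zero.mp h0 with h | h
          · exact absurd h hy0
          · linarith
        have : x ^ 2 + y ^ 2 = μ := by linear_combination -hre + x * hx2
        linarith
    have habs : ‖z‖ ^ 2 < 1 := by
      rw [Complex.sq_norm, Complex.normSq_apply, ← hxdef, ← hydef]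
      nlinarith [hnormsq]
    have h1 : ‖z‖ ^ 2 < 1 ^ 2 := by simpa using habs
    exact lt_of_pow_lt_pow_left₀ 2 zero_le_one h1
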